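/- Let $X$ be a compact metric space and let $\xi=(x_i)_{i\ge0}$, $\xi'=(y_i)_{i\ge0}$ be sequences of points in $X$. If $\lim_{n\to\infty}\frac{1}{n}\sum_{i=0}^{n-1}d(x_i,y_i)=0$, then $\overline{\omega}(\xi)=\overline{\omega}(\xi')$. -/

import Mathlib

open Filter Metric Set
open scoped Classical Topology

noncomputable def upperDensity (A : Set ℕ) : ℝ :=
  Filter.limsup
    (fun n : ℕ => (((Finset.range n).filter (fun i => i ∈ A)).card : ℝ) / n) Filter.atTop

def HasDensityOne (A : Set ℕ) : Prop :=
  Filter.Tendsto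
    (fun n : ℕ => (((Finset.range n).filter (fun i => i ∈ A)).card : ℝ) / n) Filter.atTop (nhds 1)

def omegaBarSeq {X : Type*} [MetricSpace X] (x : ℕ → X) : Set X :=
  {y | ∀ ε > 0, 0 < upperDensity {i | dist (x i) y < ε}}

def omegaBar {X : Type*} [MetricSpace X] (f : X → X) (x : X) : Set X :=
  omegaBarSeq (fun i => f^[i] x)

private noncomputable def cF (A : Set ℕ) (n : ℕ) : ℝ :=
  (((Finset.range n).filter (fun i => i ∈ A)).card : ℝ) / n

private lemma cF_nonneg (A : Set ℕ) (n : ℕ) : 0 ≤ cF A n := by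
  unfold cF; positivity

private lemma cF_le_one (A : Set ℕ) (n : ℕ) : cF A n ≤ 1 := by
  unfold cF
  rcases Nat.eq_zero_or_pos n with rfl | hn
  · simp
  · rw [div_le_one (by exact_mod_cast hn)]
    exact_mod_cast (Finset.card_filter_le _ _).trans (by simp)

private lemma cF_bdd (A : Set ℕ) : Filter.IsBoundedUnder (· ≤ ·) Filter.atTop (cF A) :=
  Filter.isBoundedUnder_of ⟨1, fun n => cF_le_one A n⟩

private lemma cF_cobdd (A : Set ℕ) : Filter.IsCoboundedUnder (· ≤ ·) Filter.atTop (cF A) :=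
  Filter.IsBoundedUnder.isCoboundedUnder_le (Filter.isBoundedUnder_of ⟨0, fun n => cF_nonneg A n⟩)

private lemma cF_mono {A B : Set ℕ} (hAB : A ⊆ B) (n : ℕ) : cF A n ≤ cF B n := by
  rcases Nat.eq_zero_or_pos n with rfl | hn
  · simp [cF]
  · unfold cF
    have hn' : (0:ℝ) < n := by exact_mod_cast hn
    apply div_le_div_of_nonneg_right ?_ hn'.le |>.trans le_rfl
    exact_mod_cast Finset.card_le_card (Finset.monotone_filter_right _ (fun i _ hi => hAB hi))

private lemma upperDensity_eq (A : Set ℕ) : upperDensity A = Filter.limsup (cF A) Filter.atTop :=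
  rfl

private lemma omegaBarSeq_subset {X : Type*} [MetricSpace X] (x y : ℕ → X)
    (h : Filter.Tendsto (fun n : ℕ => (∑ i ∈ Finset.range n, dist (x i) (y i)) / n)
      Filter.atTop (nhds 0)) :
    omegaBarSeq x ⊆ omegaBarSeq y := by
  intro z hz ε hε
  set B : Set ℕ := {i | ε / 2 ≤ dist (x i) (y i)} with hBdef
  set A : Set ℕ := {i | dist (x i) z < ε / 2} with hAdef
  set T : Set ℕ := {i | dist (y i) z < ε} with hTdef
  set C : Set ℕ := {i | i ∈ A ∧ i ∉ B} with hCdef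
  -- density of B tends to 0 (Markov)
  have hBle : ∀ n : ℕ, cF B n ≤ (2 / ε) * ((∑ i ∈ Finset.range n, dist (x i) (y i)) / n) := by
    intro n
    set c : ℝ := (((Finset.range n).filter (fun i => i ∈ B)).card : ℝ) with hc
    set S : ℝ := ∑ i ∈ Finset.range n, dist (x i) (y i) with hS
    have hcount : c * (ε / 2) ≤ S := by
      calc c * (ε / 2)
          = ∑ _i ∈ (Finset.range n).filter (fun i => i ∈ B), (ε / 2) := by
            rw [Finset.sum_const, nsmul_eq_mul]
        _ ≤ ∑ i ∈ (Finset.range n).filter (fun i => i ∈ B), dist (x i) (y i) := by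
            apply Finset.sum_le_sum
            intro i hi
            exact (Finset.mem_filter.mp hi).2
        _ ≤ S := by
            apply Finset.sum_le_sum_of_subset_of_nonneg (Finset.filter_subset _ _)
            intro i _ _; exact dist_nonneg
    have hcle : c ≤ 2 / ε * S := by
      rw [div_mul_eq_mul_div, le_div_iff₀ hε]
      nlinarith
    rcases Nat.eq_zero_or_pos n with rfl | hn
    · simp [cF]
    · have hn' : (0:ℝ) < n := by exact_mod_cast hn
      show c / n ≤ 2 / ε * (S / n)
      rw [mul_div_assoc']
      exact div_le_div_of_nonneg_right hcle hn'.le |>.trans le_rfl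
  have hB0 : Filter.Tendsto (cF B) Filter.atTop (nhds 0) := by
    have hg : Filter.Tendsto
        (fun n : ℕ => (2 / ε) * ((∑ i ∈ Finset.range n, dist (x i) (y i)) / n))
        Filter.atTop (nhds 0) := by
      simpa using h.const_mul (2 / ε)
    exact squeeze_zero (fun n => cF_nonneg B n) hBle hg
  have hL : 0 < upperDensity A := hz (ε / 2) (half_pos hε)
  set L : ℝ := upperDensity A with hLdef
  -- C ⊆ T
  have hsub : C ⊆ T := by
    intro i hi
    have h1 : dist (x i) z < ε / 2 := hi.1
    have h2 : dist (x i) (y i) < ε / 2 := lt_of_not_ge hi.2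
    have := dist_triangle (y i) (x i) z
    rw [dist_comm (y i) (x i)] at this
    show dist (y i) z < ε
    linarith
  -- counting: cF A n ≤ cF (C) n + cF B n
  have hcnt : ∀ n, cF A n ≤ cF (C) n + cF B n := by
    intro n
    rcases Nat.eq_zero_or_pos n with rfl | hn
    · simp [cF]
    · have hn' : (0:ℝ) < n := by exact_mod_cast hn
      unfold cF
      rw [← add_div]
      apply div_le_div_of_nonneg_right ?_ hn'.le |>.trans le_rfl
      rw [← Nat.cast_add]
      refine Nat.cast_le.mpr ?_
      refine (Finset.card_le_card (fun i hi => ?_)).trans (Finset.card_union_le _ _)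
      simp only [Finset.mem_filter] at hi
      simp only [Finset.mem_union, Finset.mem_filter]
      by_cases hiB : i ∈ B
      · exact Or.inr ⟨hi.1, hiB⟩
      · exact Or.inl ⟨hi.1, ⟨hi.2, hiB⟩⟩
  -- eventually cF B n < L / 2
  have hev : ∀ᶠ n in Filter.atTop, cF B n < L / 2 :=
    hB0.eventually (eventually_lt_nhds (by linarith))
  -- eventually cF A n - L/2 ≤ cF T n
  have hev2 : (fun n => cF A n - L / 2) ≤ᶠ[Filter.atTop] cF T := by
    filter_upwards [hev] with n hn
    have h1 := hcnt n
    have h2 := cF_mono hsub n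
    linarith
  have hlim : L - L / 2 ≤ upperDensity T := by
    have heq : Filter.limsup (fun n => cF A n - L / 2) Filter.atTop = L - L / 2 := by
      rw [limsup_sub_const Filter.atTop (cF A) (L / 2) (cF_bdd A) (cF_cobdd A)]
      rw [hLdef, upperDensity_eq]
    rw [← heq, upperDensity_eq]
    apply Filter.limsup_le_limsup hev2 ?_ (cF_bdd T)
    exact Filter.IsBoundedUnder.isCoboundedUnder_le
      (Filter.isBoundedUnder_of ⟨-(L / 2), fun n => by
        have := cF_nonneg A n; simp; linarith⟩)
  show 0 < upperDensity T
  linarith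

theorem stmt1 {X : Type*} [MetricSpace X] [CompactSpace X] (x y : ℕ → X)
    (h : Filter.Tendsto (fun n : ℕ => (∑ i ∈ Finset.range n, dist (x i) (y i)) / n)
      Filter.atTop (nhds 0)) :
    omegaBarSeq x = omegaBarSeq y := by
  have h' : Filter.Tendsto (fun n : ℕ => (∑ i ∈ Finset.range n, dist (y i) (x i)) / n)
      Filter.atTop (nhds 0) := by
    simpa [dist_comm] using h
  exact Set.Subset.antisymm (omegaBarSeq_subset x y h) (omegaBarSeq_subset y x h')
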